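/- Let T be a tree on n vertices and all edge densities equal to 1 - d with d < 1/λ², where λ is the largest eigenvalue of the adjacency matrix of T. Then for all t ∈ [0,1], the specialized multivariate matching polynomial F_T(d,t) = Σ_k (-1)^k m_k(T) (dt)^k is strictly positive. -/

import Mathlib

open Finset
open scoped Classical

/-- A matching of a simple graph: a finite set of edges, pairwise vertex-disjoint. -/
def IsMatchingSet {V : Type*} [DecidableEq V] (G : SimpleGraph V) (M : Finset (Sym2 V)) : Prop :=
  (∀ e ∈ M, e ∈ G.edgeSet) ∧
    ∀ e ∈ M, ∀ f ∈ M, e ≠ f → ∀ v, v ∈ e → v ∉ f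

/-- The finite set of all matchings of `G` (including the empty matching). -/
noncomputable def matchings {V : Type*} [Fintype V] [DecidableEq V] (G : SimpleGraph V) :
    Finset (Finset (Sym2 V)) :=
  Finset.univ.filter fun M => IsMatchingSet G M


section Aux

variable {V : Type*} [DecidableEq V] {T : SimpleGraph V}


private lemma matching_subset {M M' : Finset (Sym2 V)} (h : M' ⊆ M)
    (hM : IsMatchingSet T M) : IsMatchingSet T M' :=
  ⟨fun e he => hM.1 e (h he), fun e he f hf hef v hv => hM.2 e (h he) f (h hf) hef v hv⟩

private lemma edge_unique {M : Finset (Sym2 V)} (hM : IsMatchingSet T M) {x : V} {e f : Sym2 V}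
    (he : e ∈ M) (hf : f ∈ M) (hxe : x ∈ e) (hxf : x ∈ f) : e = f := by
  by_contra h
  exact hM.2 e he f hf h x hxe hxf

noncomputable def partnerFn (M : Finset (Sym2 V)) (x : V) : V :=
  if h : ∃ e ∈ M, x ∈ e then Sym2.Mem.other' h.choose_spec.2 else x

private lemma partner_spec {M : Finset (Sym2 V)} (hM : IsMatchingSet T M) {x : V} {e : Sym2 V}
    (he : e ∈ M) (hx : x ∈ e) : s(x, partnerFn M x) = e := by
  have hex : ∃ e ∈ M, x ∈ e := ⟨e, he, hx⟩
  rw [partnerFn, dif_pos hex, Sym2.other_spec']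
  exact edge_unique hM hex.choose_spec.1 he hex.choose_spec.2 hx

private lemma partner_fixed {M : Finset (Sym2 V)} {x : V} (h : ∀ e ∈ M, x ∉ e) :
    partnerFn M x = x := by
  rw [partnerFn, dif_neg]
  rintro ⟨e, he, hx⟩
  exact h e he hx

private lemma partner_adj {M : Finset (Sym2 V)} (hM : IsMatchingSet T M) {x : V} {e : Sym2 V}
    (he : e ∈ M) (hx : x ∈ e) : T.Adj x (partnerFn M x) := by
  have := partner_spec hM he hx
  have h2 : s(x, partnerFn M x) ∈ T.edgeSet := this ▸ hM.1 e he
  exact h2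

private lemma partner_ne {M : Finset (Sym2 V)} (hM : IsMatchingSet T M) {x : V} {e : Sym2 V}
    (he : e ∈ M) (hx : x ∈ e) : partnerFn M x ≠ x :=
  fun h => T.irrefl (h ▸ partner_adj hM he hx)

private lemma partner_involutive {M : Finset (Sym2 V)} (hM : IsMatchingSet T M) :
    Function.Involutive (partnerFn M) := by
  intro x
  by_cases h : ∃ e ∈ M, x ∈ e
  · obtain ⟨e, he, hx⟩ := h
    have h1 : s(x, partnerFn M x) = e := partner_spec hM he hx
    have hp : partnerFn M x ∈ e := h1 ▸ Sym2.mem_iff.mpr (Or.inr rfl)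
    have h2 : s(partnerFn M x, partnerFn M (partnerFn M x)) = e := partner_spec hM he hp
    rw [← h1, Sym2.eq_iff] at h2
    rcases h2 with ⟨h3, h4⟩ | ⟨_, h4⟩
    · rw [h4, h3]
    · exact h4
  · push_neg at h
    rw [partner_fixed h, partner_fixed h]

noncomputable def permOf (T : SimpleGraph V) (M : Finset (Sym2 V)) : Equiv.Perm V :=
  if h : IsMatchingSet T M then Function.Involutive.toPerm _ (partner_involutive h) else 1

private lemma permOf_apply {M : Finset (Sym2 V)} (hM : IsMatchingSet T M) :
    ⇑(permOf T M) = partnerFn M := by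
  rw [permOf, dif_pos hM]; rfl

private lemma permOf_insert {M : Finset (Sym2 V)} {a b : V}
    (hM' : IsMatchingSet T (insert s(a,b) M)) (he : s(a,b) ∉ M) :
    permOf T (insert s(a,b) M) = Equiv.swap a b * permOf T M := by
  have hMm : IsMatchingSet T M := matching_subset (Finset.subset_insert _ _) hM'
  have hein : s(a,b) ∈ insert s(a,b) M := Finset.mem_insert_self _ _
  have hadj : T.Adj a b := hM'.1 _ hein
  have hab : a ≠ b := hadj.ne
  -- a, b are unmatched in M
  have hanotin : ∀ f ∈ M, a ∉ f := fun f hf =>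
    hM'.2 _ hein f (Finset.mem_insert_of_mem hf) (fun h => he (h ▸ hf)) a
      (Sym2.mem_iff.mpr (Or.inl rfl))
  have hbnotin : ∀ f ∈ M, b ∉ f := fun f hf =>
    hM'.2 _ hein f (Finset.mem_insert_of_mem hf) (fun h => he (h ▸ hf)) b
      (Sym2.mem_iff.mpr (Or.inr rfl))
  apply Equiv.ext
  intro x
  rw [Equiv.Perm.mul_apply, permOf_apply hM', permOf_apply hMm]
  by_cases hxa : x = a
  · subst hxa
    have h1 : s(x, partnerFn (insert s(x,b) M) x) = s(x,b) :=
      partner_spec hM' hein (Sym2.mem_iff.mpr (Or.inl rfl))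
    rw [Sym2.eq_iff] at h1
    have h2 : partnerFn (insert s(x,b) M) x = b := by
      rcases h1 with ⟨_, h⟩ | ⟨h, _⟩
      · exact h
      · exact (hab h).elim
    rw [h2, partner_fixed hanotin, Equiv.swap_apply_left]
  · by_cases hxb : x = b
    · subst hxb
      have h1 : s(x, partnerFn (insert s(a,x) M) x) = s(a,x) :=
        partner_spec hM' hein (Sym2.mem_iff.mpr (Or.inr rfl))
      rw [Sym2.eq_iff] at h1
      have h2 : partnerFn (insert s(a,x) M) x = a := by
        rcases h1 with ⟨h, h'⟩ | ⟨_, h⟩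
        · exact (hab h.symm).elim
        · exact h
      rw [h2, partner_fixed hbnotin, Equiv.swap_apply_right]
    · by_cases hx : ∃ e ∈ M, x ∈ e
      · obtain ⟨e, hf, hxe⟩ := hx
        have h1 : s(x, partnerFn (insert s(a,b) M) x) = e :=
          partner_spec hM' (Finset.mem_insert_of_mem hf) hxe
        have h2 : s(x, partnerFn M x) = e := partner_spec hMm hf hxe
        rw [← h2, Sym2.eq_iff] at h1
        have h3 : partnerFn (insert s(a,b) M) x = partnerFn M x := by
          rcases h1 with ⟨_, h⟩ | ⟨h, h'⟩
          · exact h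
          · rw [h', ← h]
        rw [h3]
        have hpa : partnerFn M x ≠ a := by
          intro h
          exact hanotin e hf (h ▸ (h2 ▸ Sym2.mem_iff.mpr (Or.inr rfl)))
        have hpb : partnerFn M x ≠ b := by
          intro h
          exact hbnotin e hf (h ▸ (h2 ▸ Sym2.mem_iff.mpr (Or.inr rfl)))
        rw [Equiv.swap_apply_of_ne_of_ne hpa hpb]
      · push_neg at hx
        have hx' : ∀ e ∈ insert s(a,b) M, x ∉ e := by
          intro e heM hxe
          rcases Finset.mem_insert.mp heM with rfl | hfM
          · rcases Sym2.mem_iff.mp hxe with rfl | rfl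
            · exact hxa rfl
            · exact hxb rfl
          · exact hx e hfM hxe
        rw [partner_fixed hx', partner_fixed hx,
          Equiv.swap_apply_of_ne_of_ne hxa hxb]


private lemma exists_walk_of_iterate {V : Type*} (T : SimpleGraph V) (f : V → V) (x : V) :
    ∀ m : ℕ, (∀ j < m, T.Adj (f^[j] x) (f^[j+1] x)) →
      ∃ w : T.Walk x (f^[m] x), w.support = (List.range (m+1)).map (f^[·] x) := by
  intro m
  induction m with
  | zero => intro _; exact ⟨SimpleGraph.Walk.nil, by simp⟩
  | succ m ih =>
    intro h
    obtain ⟨w, hw⟩ := ih (fun j hj => h j (Nat.lt_succ_of_lt hj))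
    refine ⟨w.concat (h m (Nat.lt_succ_self m)), ?_⟩
    rw [SimpleGraph.Walk.support_concat, hw]
    conv_rhs => rw [show m + 1 + 1 = (m+1) + 1 from rfl, List.range_succ, List.map_append]
    rw [List.map_cons, List.map_nil]

private lemma perm_involutive {V : Type*} [Fintype V] {T : SimpleGraph V}
    (hT : T.IsAcyclic) (σ : Equiv.Perm V)
    (hσ : ∀ i, σ i ≠ i → T.Adj i (σ i)) : ∀ i, σ (σ i) = i := by
  intro i
  by_contra h2
  have h1 : σ i ≠ i := fun h => h2 (by rw [h, h])
  set f : V → V := ⇑σ with hf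
  have hper : Function.IsPeriodicPt f (orderOf σ) i := by
    show f^[orderOf σ] i = i
    rw [hf, Equiv.Perm.iterate_eq_pow, pow_orderOf_eq_one]
    rfl
  set k := Function.minimalPeriod f i with hk
  have hkpos : 0 < k := hper.minimalPeriod_pos (orderOf_pos σ)
  have hfk : f^[k] i = i := Function.iterate_minimalPeriod
  have hinj := Function.iterate_injOn_Iio_minimalPeriod (f := f) (x := i)
  have hk1 : k ≠ 1 := by intro h; apply h1; simpa [h] using hfk
  have hk2 : k ≠ 2 := by
    intro h; apply h2; rw [h] at hfk; simpa [Function.iterate_succ_apply'] using hfk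
  have hk3 : 3 ≤ k := by omega
  have hnofix : ∀ m : ℕ, f (f^[m] i) ≠ f^[m] i := by
    intro m hm
    apply h1
    have : f^[m] (f i) = f^[m] i := by
      rw [← Function.iterate_succ_apply, Function.iterate_succ_apply', hm]
    exact (Function.Injective.iterate σ.injective m) this
  have hadj : ∀ j : ℕ, T.Adj (f^[j] (f i)) (f^[j+1] (f i)) := by
    intro j
    have := hσ (f^[j] (f i)) (by rw [← Function.iterate_succ_apply]; exact hnofix (j+1))
    rwa [show f (f^[j] (f i)) = f^[j+1] (f i) from (Function.iterate_succ_apply' f j (f i)).symm] at this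
  obtain ⟨w, hw⟩ := exists_walk_of_iterate T f (f i) (k-1) (fun j _ => hadj j)
  have hk1' : k - 1 + 1 = k := by omega
  have hend : f^[k-1] (f i) = i := by
    rw [← Function.iterate_succ_apply, Nat.succ_eq_add_one, hk1']; exact hfk
  let w' : T.Walk (f i) i := w.copy rfl hend
  have hw' : w'.support = (List.range k).map (fun j => f^[j] (f i)) := by
    rw [SimpleGraph.Walk.support_copy, hw, hk1']
  have key : ∀ a < k, ∀ b < k, f^[a+1] i = f^[b+1] i → a = b := by
    intro a ha b hb hab
    rcases Nat.lt_or_ge (a+1) k with h | h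
    · rcases Nat.lt_or_ge (b+1) k with h' | h'
      · have := hinj (Set.mem_Iio.mpr h) (Set.mem_Iio.mpr h') hab
        omega
      · have hb1 : b + 1 = k := by omega
        rw [hb1, hfk] at hab
        have := hinj (Set.mem_Iio.mpr h) (Set.mem_Iio.mpr hkpos) (by simpa only [Function.iterate_zero_apply] using hab)
        omega
    · have ha1 : a + 1 = k := by omega
      rcases Nat.lt_or_ge (b+1) k with h' | h'
      · rw [ha1, hfk] at hab
        have := hinj (Set.mem_Iio.mpr hkpos) (Set.mem_Iio.mpr h') (by simpa only [Function.iterate_zero_apply] using hab)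
        omega
      · omega
  have hnodup : w'.support.Nodup := by
    rw [hw']
    apply List.Nodup.map_on _ (List.nodup_range : (List.range k).Nodup)
    intro a ha b hb hab
    simp only [List.mem_range] at ha hb
    rw [← Function.iterate_succ_apply, ← Function.iterate_succ_apply,
      Nat.succ_eq_add_one, Nat.succ_eq_add_one] at hab
    exact key a ha b hb hab
  have hpath : w'.IsPath := SimpleGraph.Walk.IsPath.mk' hnodup
  have hadj0 : T.Adj (f i) i := (hσ i h1).symm
  let q : T.Walk (f i) i := SimpleGraph.Walk.cons hadj0 SimpleGraph.Walk.nil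
  have hqpath : q.IsPath := by
    apply SimpleGraph.Walk.IsPath.mk'
    simp [q, h1]
  have := SimpleGraph.isAcyclic_iff_path_unique.mp hT ⟨w', hpath⟩ ⟨q, hqpath⟩
  have hweq : w' = q := congrArg Subtype.val this
  have hlen : w'.support.length = q.support.length := by rw [hweq]
  rw [hw'] at hlen
  simp [q] at hlen
  omega


private lemma term_eval [Fintype V] [DecidableRel T.Adj] (y : ℝ) :
    ∀ M : Finset (Sym2 V), IsMatchingSet T M →
    ((Equiv.Perm.sign (permOf T M) : ℤ) : ℝ) *
      ∏ i, ((1 : Matrix V V ℝ) - y • T.adjMatrix ℝ) ((permOf T M) i) i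
      = (-1 : ℝ)^M.card * (y^2)^M.card := by
  set A := T.adjMatrix ℝ with hA
  set B := (1 : Matrix V V ℝ) - y • A with hB
  have hBdiag : ∀ i, B i i = 1 := by
    intro i
    simp [hB, Matrix.sub_apply, Matrix.one_apply, Matrix.smul_apply, hA]
  intro M
  induction M using Finset.induction_on with
  | empty =>
    intro _
    have h1 : permOf T (∅ : Finset (Sym2 V)) = 1 := by
      apply Equiv.ext; intro x
      rw [permOf_apply ⟨by simp, by simp⟩, partner_fixed (by simp)]
      rfl
    rw [h1]
    simp [hBdiag]
  | @insert e M he ih =>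
    revert he
    induction e using Sym2.ind with | _ a b =>
    intro he hM'
    have hMm : IsMatchingSet T M := matching_subset (Finset.subset_insert _ _) hM'
    have hein : s(a,b) ∈ insert s(a,b) M := Finset.mem_insert_self _ _
    have hadj : T.Adj a b := hM'.1 _ hein
    have hab : a ≠ b := hadj.ne
    have hanotin : ∀ f ∈ M, a ∉ f := fun f hf =>
      hM'.2 _ hein f (Finset.mem_insert_of_mem hf) (fun h => he (h ▸ hf)) a
        (Sym2.mem_iff.mpr (Or.inl rfl))
    have hbnotin : ∀ f ∈ M, b ∉ f := fun f hf =>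
      hM'.2 _ hein f (Finset.mem_insert_of_mem hf) (fun h => he (h ▸ hf)) b
        (Sym2.mem_iff.mpr (Or.inr rfl))
    rw [permOf_insert hM' he]
    set σ := permOf T M with hσ
    have hsa : σ a = a := by
      rw [hσ, permOf_apply hMm]; exact partner_fixed hanotin
    have hsb : σ b = b := by
      rw [hσ, permOf_apply hMm]; exact partner_fixed hbnotin
    have hfix : ∀ i, i ≠ a → i ≠ b → (Equiv.swap a b) (σ i) = σ i := by
      intro i hia hib
      have hne : σ i ≠ a ∧ σ i ≠ b := by
        by_cases hx : ∃ f ∈ M, i ∈ f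
        · obtain ⟨f, hf, hif⟩ := hx
          have h1 : s(i, σ i) = f := by
            rw [hσ, permOf_apply hMm]; exact partner_spec hMm hf hif
          have h2 : σ i ∈ f := h1 ▸ Sym2.mem_iff.mpr (Or.inr rfl)
          exact ⟨fun h => hanotin f hf (h ▸ h2), fun h => hbnotin f hf (h ▸ h2)⟩
        · push_neg at hx
          have : σ i = i := by rw [hσ, permOf_apply hMm]; exact partner_fixed hx
          rw [this]; exact ⟨hia, hib⟩
      exact Equiv.swap_apply_of_ne_of_ne hne.1 hne.2
    -- entry values
    have hBba : B b a = -y := by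
      have h1 : T.Adj b a := hadj.symm
      simp [hB, Matrix.sub_apply, Matrix.one_apply_ne (Ne.symm hab), Matrix.smul_apply, hA, h1]
    have hBab : B a b = -y := by
      simp [hB, Matrix.sub_apply, Matrix.one_apply_ne hab, Matrix.smul_apply, hA, hadj]
    -- split products
    have hmb : b ∈ (univ : Finset V).erase a := Finset.mem_erase.mpr ⟨Ne.symm hab, Finset.mem_univ b⟩
    have hsplit : ∀ τ : Equiv.Perm V,
        ∏ i, B (τ i) i = B (τ a) a * (B (τ b) b * ∏ i ∈ (univ.erase a).erase b, B (τ i) i) := by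
      intro τ
      rw [← Finset.mul_prod_erase univ _ (Finset.mem_univ a), ← Finset.mul_prod_erase _ _ hmb]
    have hrest : ∏ i ∈ (univ.erase a).erase b, B ((Equiv.swap a b * σ) i) i
        = ∏ i ∈ (univ.erase a).erase b, B (σ i) i := by
      apply Finset.prod_congr rfl
      intro i hi
      have hib : i ≠ b := (Finset.mem_erase.mp hi).1
      have hia : i ≠ a := (Finset.mem_erase.mp (Finset.mem_erase.mp hi).2).1
      rw [Equiv.Perm.mul_apply, hfix i hia hib]
    have hcard : (insert s(a,b) M).card = M.card + 1 := Finset.card_insert_of_notMem he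
    have ihv := ih hMm
    rw [hsplit, hrest, map_mul, Equiv.Perm.sign_swap hab]
    have h2 : (Equiv.swap a b * σ) a = b := by rw [Equiv.Perm.mul_apply, hsa, Equiv.swap_apply_left]
    have h3 : (Equiv.swap a b * σ) b = a := by rw [Equiv.Perm.mul_apply, hsb, Equiv.swap_apply_right]
    rw [h2, h3, hBba, hBab, hcard]
    rw [hsplit σ, hsa, hsb, hBdiag a, hBdiag b] at ihv
    push_cast
    push_cast at ihv
    ring_nf
    ring_nf at ihv
    nlinarith [ihv]

private lemma matched_of_ne {M : Finset (Sym2 V)} {x : V}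
    (h : partnerFn M x ≠ x) : ∃ e ∈ M, x ∈ e := by
  by_contra hc
  push_neg at hc
  exact h (partner_fixed hc)

private lemma permOf_inj {M M' : Finset (Sym2 V)} (hM : IsMatchingSet T M)
    (hM' : IsMatchingSet T M') (h : permOf T M = permOf T M') : M = M' := by
  have key : ∀ (N N' : Finset (Sym2 V)), IsMatchingSet T N → IsMatchingSet T N' →
      partnerFn N = partnerFn N' → N ⊆ N' := by
    intro N N' hN hN' hp e heN
    have hx : e.out.1 ∈ e := Sym2.out_fst_mem e
    have h1 : s(e.out.1, partnerFn N e.out.1) = e := partner_spec hN heN hx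
    have h2 : partnerFn N e.out.1 ≠ e.out.1 := partner_ne hN heN hx
    have h3 : partnerFn N' e.out.1 ≠ e.out.1 := by rw [← hp]; exact h2
    obtain ⟨f, hf, hxf⟩ := matched_of_ne h3
    have h4 : s(e.out.1, partnerFn N' e.out.1) = f := partner_spec hN' hf hxf
    rw [← hp, h1] at h4
    exact h4 ▸ hf
  have hp : partnerFn M = partnerFn M' := by
    rw [← permOf_apply hM, ← permOf_apply hM', h]
  exact Finset.Subset.antisymm (key M M' hM hM' hp) (key M' M hM' hM hp.symm)

private noncomputable def matchOf (T : SimpleGraph V) [Fintype V] (σ : Equiv.Perm V) :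
    Finset (Sym2 V) :=
  (Finset.univ.filter fun x => σ x ≠ x).image fun x => s(x, σ x)

private lemma matchOf_spec [Fintype V] (σ : Equiv.Perm V) (hinv : ∀ i, σ (σ i) = i)
    {v : V} {e : Sym2 V} (he : e ∈ matchOf T σ) (hv : v ∈ e) : e = s(v, σ v) ∧ σ v ≠ v := by
  obtain ⟨x, hx, rfl⟩ := Finset.mem_image.mp he
  have hx' : σ x ≠ x := (Finset.mem_filter.mp hx).2
  rcases Sym2.mem_iff.mp hv with rfl | rfl
  · exact ⟨rfl, hx'⟩
  · constructor
    · rw [hinv x, Sym2.eq_swap]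
    · rw [hinv x]; intro hcon; exact hx' hcon.symm

private lemma matchOf_isMatching [Fintype V] (σ : Equiv.Perm V)
    (hσ : ∀ i, σ i ≠ i → T.Adj i (σ i)) (hinv : ∀ i, σ (σ i) = i) :
    IsMatchingSet T (matchOf T σ) := by
  constructor
  · intro e he
    obtain ⟨x, hx, rfl⟩ := Finset.mem_image.mp he
    exact hσ x (Finset.mem_filter.mp hx).2
  · intro e he f hf hef v hve hvf
    obtain ⟨h1, _⟩ := matchOf_spec σ hinv he hve
    obtain ⟨h2, _⟩ := matchOf_spec σ hinv hf hvf
    exact hef (h1.trans h2.symm)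

private lemma permOf_matchOf [Fintype V] (σ : Equiv.Perm V)
    (hσ : ∀ i, σ i ≠ i → T.Adj i (σ i)) (hinv : ∀ i, σ (σ i) = i) :
    permOf T (matchOf T σ) = σ := by
  have hM : IsMatchingSet T (matchOf T σ) := matchOf_isMatching σ hσ hinv
  apply Equiv.ext
  intro x
  rw [permOf_apply hM]
  by_cases hx : σ x = x
  · rw [hx]
    apply partner_fixed
    intro e he hxe
    exact (matchOf_spec σ hinv he hxe).2 hx
  · have hein : s(x, σ x) ∈ matchOf T σ :=
      Finset.mem_image.mpr ⟨x, Finset.mem_filter.mpr ⟨Finset.mem_univ x, hx⟩, rfl⟩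
    have h1 : s(x, partnerFn (matchOf T σ) x) = s(x, σ x) :=
      partner_spec hM hein (Sym2.mem_iff.mpr (Or.inl rfl))
    rw [Sym2.eq_iff] at h1
    rcases h1 with ⟨_, h⟩ | ⟨h, h'⟩
    · exact h
    · exact (hx h.symm).elim

private lemma det_identity [Fintype V] [DecidableRel T.Adj] (hT : T.IsAcyclic) (y : ℝ) :
    ((1 : Matrix V V ℝ) - y • T.adjMatrix ℝ).det
      = ∑ M ∈ matchings T, (-1 : ℝ)^M.card * (y^2)^M.card := by
  classical
  set B := (1 : Matrix V V ℝ) - y • T.adjMatrix ℝ with hB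
  set S : Finset (Equiv.Perm V) :=
    Finset.univ.filter (fun σ : Equiv.Perm V => ∀ i, σ i ≠ i → T.Adj i (σ i)) with hS
  have step1 : B.det = ∑ σ ∈ S, ((Equiv.Perm.sign σ : ℤ) : ℝ) * ∏ i, B (σ i) i := by
    rw [Matrix.det_apply']
    apply (Finset.sum_subset (Finset.filter_subset _ _) _).symm
    intro σ _ hσ
    rw [Finset.mem_filter] at hσ
    push_neg at hσ
    obtain ⟨i, hi, hadj⟩ := hσ (Finset.mem_univ σ)
    have hentry : B (σ i) i = 0 := by
      have h1 : ¬ T.Adj (σ i) i := fun h => hadj h.symm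
      simp [hB, Matrix.sub_apply, Matrix.one_apply_ne hi, Matrix.smul_apply,
        SimpleGraph.adjMatrix_apply, h1]
    rw [Finset.prod_eq_zero (f := fun j => B (σ j) j) (Finset.mem_univ i) hentry, mul_zero]
  rw [step1]
  apply (Finset.sum_bij (fun (M : Finset (Sym2 V)) (hM : M ∈ matchings T) => permOf T M)
    ?_ ?_ ?_ ?_).symm
  · intro M hM
    have hMm : IsMatchingSet T M := (Finset.mem_filter.mp hM).2
    rw [hS, Finset.mem_filter]
    refine ⟨Finset.mem_univ _, fun i hi => ?_⟩
    rw [permOf_apply hMm] at hi ⊢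
    obtain ⟨e, he, hxe⟩ := matched_of_ne hi
    exact partner_adj hMm he hxe
  · intro M hM M' hM' h
    exact permOf_inj (Finset.mem_filter.mp hM).2 (Finset.mem_filter.mp hM').2 h
  · intro σ hσ
    rw [hS, Finset.mem_filter] at hσ
    have hinv : ∀ i, σ (σ i) = i := perm_involutive hT σ hσ.2
    refine ⟨matchOf T σ, ?_, permOf_matchOf σ hσ.2 hinv⟩
    rw [matchings, Finset.mem_filter]
    exact ⟨Finset.mem_univ _, matchOf_isMatching σ hσ.2 hinv⟩
  · intro M hM
    exact (term_eval y M (Finset.mem_filter.mp hM).2).symm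


private lemma det_one_sub_pos {V : Type*} [Fintype V] [DecidableEq V]
    {A : Matrix V V ℝ} (hA : A.IsHermitian) {y : ℝ}
    (h : ∀ μ : ℝ, (∃ v : V → ℝ, v ≠ 0 ∧ A.mulVec v = μ • v) → y * μ < 1) :
    0 < ((1 : Matrix V V ℝ) - y • A).det := by
  set U : Matrix V V ℝ := (hA.eigenvectorUnitary : Matrix V V ℝ) with hU
  set D : Matrix V V ℝ := Matrix.diagonal (RCLike.ofReal ∘ hA.eigenvalues) with hD
  have hUU : U * star U = 1 := hA.eigenvectorUnitary.prop.2
  have hUU' : star U * U = 1 := hA.eigenvectorUnitary.prop.1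
  have hsp : A = U * D * star U := hA.spectral_theorem
  have hfact : (1 : Matrix V V ℝ) - y • A = U * ((1 : Matrix V V ℝ) - y • D) * star U := by
    rw [Matrix.mul_sub, Matrix.sub_mul, Matrix.mul_one, hUU, hsp]
    rw [Matrix.mul_smul, Matrix.smul_mul]
  have hdet : ((1 : Matrix V V ℝ) - y • A).det = ((1 : Matrix V V ℝ) - y • D).det := by
    rw [hfact, Matrix.det_mul, Matrix.det_mul]
    have : U.det * ((1 : Matrix V V ℝ) - y • D).det * (star U).det
        = ((1 : Matrix V V ℝ) - y • D).det * ((star U) * U).det := by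
      rw [Matrix.det_mul]; ring
    rw [this, hUU', Matrix.det_one, mul_one]
  rw [hdet]
  have hDdiag : (1 : Matrix V V ℝ) - y • D = Matrix.diagonal (fun i => 1 - y * hA.eigenvalues i) := by
    rw [hD, ← Matrix.diagonal_one, ← Matrix.diagonal_smul, ← Matrix.diagonal_sub]
    rfl
  rw [hDdiag, Matrix.det_diagonal]
  apply Finset.prod_pos
  intro j _
  have hv : (WithLp.equiv 2 (V → ℝ)) (hA.eigenvectorBasis j) ≠ 0 := by
    have h0 : hA.eigenvectorBasis j ≠ 0 := hA.eigenvectorBasis.orthonormal.ne_zero j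
    simpa using h0
  have heig := hA.mulVec_eigenvectorBasis j
  have := h (hA.eigenvalues j) ⟨_, hv, heig⟩
  linarith

end Aux

/-- Let `T` be a tree with spectral radius `λ` (the largest eigenvalue of its adjacency
matrix). If `0 ≤ d ≤ 1` and `d < 1/λ²`, then for all `t ∈ [0,1]` the specialized
multivariate matching polynomial `F_T(d,t) = Σ_k (-1)^k m_k(T) (dt)^k` is strictly
positive. -/
theorem stmt_16 {V : Type*} [Fintype V] [DecidableEq V] (T : SimpleGraph V)
    [DecidableRel T.Adj] (hT : T.IsTree) (lam : ℝ)
    (hlam : IsGreatest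
      {μ : ℝ | ∃ y : V → ℝ, y ≠ 0 ∧ (T.adjMatrix ℝ).mulVec y = μ • y} lam)
    (d : ℝ) (hd0 : 0 ≤ d) (hd1 : d ≤ 1) (hd : d < 1 / lam ^ 2) :
    ∀ t : ℝ, 0 ≤ t → t ≤ 1 →
      0 < ∑ M ∈ matchings T, (-1 : ℝ) ^ M.card * (d * t) ^ M.card := by
  intro t ht0 ht1
  have hx0 : 0 ≤ d * t := mul_nonneg hd0 ht0
  set y := Real.sqrt (d * t) with hy
  have hy2 : y ^ 2 = d * t := Real.sq_sqrt hx0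
  have hsum : ∑ M ∈ matchings T, (-1:ℝ)^M.card * (d*t)^M.card
      = ∑ M ∈ matchings T, (-1:ℝ)^M.card * (y^2)^M.card :=
    Finset.sum_congr rfl fun M _ => by rw [hy2]
  rw [hsum, ← det_identity hT.2 y]
  apply det_one_sub_pos (T.isSymm_adjMatrix (α := ℝ))
  rintro μ ⟨v, hv, heq⟩
  have hμ : μ ≤ lam := hlam.2 ⟨v, hv, heq⟩
  rcases le_or_gt μ 0 with hμ0 | hμ0
  · have : y * μ ≤ 0 := mul_nonpos_of_nonneg_of_nonpos (Real.sqrt_nonneg _) hμ0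
    linarith
  · have hlam0 : 0 < lam := lt_of_lt_of_le hμ0 hμ
    have h1 : d * t ≤ d := mul_le_of_le_one_right hd0 ht1
    have h2 : d * lam^2 < 1 := by
      have := mul_lt_mul_of_pos_right hd (pow_pos hlam0 2)
      rwa [one_div, inv_mul_cancel₀ (ne_of_gt (pow_pos hlam0 2))] at this
    have h3 : (y*lam)^2 < 1 := by
      rw [mul_pow, hy2]
      nlinarith
    have h4 : 0 ≤ y * lam := mul_nonneg (Real.sqrt_nonneg _) hlam0.le
    have h5 : y * lam < 1 := by nlinarith
    have h6 : y * μ ≤ y * lam := mul_le_mul_of_nonneg_left hμ (Real.sqrt_nonneg _)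
    linarith
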